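/- For every positive rational r, the complete tripartite graph K_{1,3,3} is a subgraph of the distance-√r graph on ℚ⁵: there exist points c, a₁, a₂, a₃, b₁, b₂, b₃ ∈ ℚ⁵, with {c}, {a₁,a₂,a₃}, {b₁,b₂,b₃} forming the three parts, such that any two points from different parts are at Euclidean distance √r, and points within a part are pairwise distinct. -/

import Mathlib

/-- Every positive rational doubled is a sum of four rational squares. -/
lemma stmt_19_four_sq (r : ℚ) (hr : 0 < r) : ∃ w x y z : ℚ, w^2+x^2+y^2+z^2 = 2*r := by
  obtain ⟨a, b, c, d, habcd⟩ := Nat.sum_four_squares (2 * r.num.toNat * r.den)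
  have hden : (r.den : ℚ) ≠ 0 := by positivity
  refine ⟨a / r.den, b / r.den, c / r.den, d / r.den, ?_⟩
  have h2 : ((a:ℚ)^2+(b:ℚ)^2+(c:ℚ)^2+(d:ℚ)^2) = 2 * r.num.toNat * r.den := by
    exact_mod_cast congrArg (Nat.cast : ℕ → ℚ) habcd
  have hnum : (r.num.toNat : ℚ) = r * r.den := by
    have h0 : ((r.num.toNat : ℤ) : ℚ) = (r.num : ℚ) := by
      rw [Int.toNat_of_nonneg (le_of_lt (Rat.num_pos.mpr hr))]
    push_cast at h0 ⊢
    rw [h0, Rat.mul_den_eq_num]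
  field_simp
  rw [h2, hnum]; ring

set_option maxHeartbeats 1000000 in
/-- The `a`-part of the configuration is injective. -/
lemma stmt_19_inj_a (w x y z X Y : ℚ) (hYpos : 0 < Y) :
    Function.Injective
    ![![w/2 - x/2, x/2 + w/2, y/2 + z/2, z/2 - y/2, 0],
      ![w/2 - x*X, x/2 + w*X, y/2 + z*X, z/2 - y*X, Y],
      ![w/2 - x*X, x/2 + w*X, y/2 + z*X, z/2 - y*X, -Y]] := by
  intro i j hij
  have h4 := congrFun hij 4
  fin_cases i <;> fin_cases j <;> simp at h4 ⊢ <;> linarith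

set_option maxHeartbeats 1000000 in
/-- The `b`-part of the configuration is injective. -/
lemma stmt_19_inj_b (w x y z : ℚ) (hs0 : (0:ℚ) < w^2+x^2+y^2+z^2) :
    Function.Injective
    ![![w/2 - y/2, x/2 - z/2, y/2 + w/2, z/2 + x/2, 0],
      ![w/2 - 3*y/10 - 2*z/5, x/2 - 3*z/10 + 2*y/5, y/2 + 3*w/10 - 2*x/5, z/2 + 3*x/10 + 2*w/5, 0],
      ![w/2 + 3*y/10 - 2*z/5, x/2 + 3*z/10 + 2*y/5, y/2 - 3*w/10 - 2*x/5, z/2 - 3*x/10 + 2*w/5, 0]] := by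
  intro i j hij
  have e0 := congrFun hij 0
  have e1 := congrFun hij 1
  have e2 := congrFun hij 2
  have e3 := congrFun hij 3
  fin_cases i <;> fin_cases j <;> simp at e0 e1 e2 e3 ⊢ <;>
    · exfalso
      have hw : w = 0 := by linarith
      have hx : x = 0 := by linarith
      have hy : y = 0 := by linarith
      have hz : z = 0 := by linarith
      rw [hw, hx, hy, hz] at hs0
      norm_num at hs0

set_option maxHeartbeats 2000000 in
/-- Cross distances between the `a`-part and the `b`-part. -/
lemma stmt_19_cross (w x y z X Y : ℚ) (hs0 : (0:ℚ) < w^2+x^2+y^2+z^2)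
    (hX : X = (1-(w^2+x^2+y^2+z^2))/(2*(1+(w^2+x^2+y^2+z^2))))
    (hY : Y = (w^2+x^2+y^2+z^2)/(1+(w^2+x^2+y^2+z^2))) :
    ∀ i j, ∑ k, (![![w/2 - x/2, x/2 + w/2, y/2 + z/2, z/2 - y/2, 0],
      ![w/2 - x*X, x/2 + w*X, y/2 + z*X, z/2 - y*X, Y],
      ![w/2 - x*X, x/2 + w*X, y/2 + z*X, z/2 - y*X, -Y]] i k -
      ![![w/2 - y/2, x/2 - z/2, y/2 + w/2, z/2 + x/2, 0],
      ![w/2 - 3*y/10 - 2*z/5, x/2 - 3*z/10 + 2*y/5, y/2 + 3*w/10 - 2*x/5, z/2 + 3*x/10 + 2*w/5, 0],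
      ![w/2 + 3*y/10 - 2*z/5, x/2 + 3*z/10 + 2*y/5, y/2 - 3*w/10 - 2*x/5, z/2 - 3*x/10 + 2*w/5, 0]] j k) ^ 2
      = (w^2+x^2+y^2+z^2)/2 := by
  have hT' : (1:ℚ) + (w^2+x^2+y^2+z^2) ≠ 0 := by positivity
  subst hX hY
  intro i j
  fin_cases i <;> fin_cases j <;>
    · simp only [Fin.sum_univ_five, Matrix.cons_val_zero, Matrix.cons_val_one, Matrix.head_cons,
        Matrix.cons_val_two, Matrix.tail_cons, Matrix.cons_val_three, Matrix.cons_val_four,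
        Matrix.cons_val', Matrix.head_fin_const, Matrix.empty_val', Matrix.cons_val_fin_one,
        Fin.mk_zero, Fin.mk_one, Fin.reduceFinMk]
      field_simp
      ring

set_option maxHeartbeats 2000000 in
/-- Distances from the center to the `a`-part. -/
lemma stmt_19_ca (w x y z X Y : ℚ) (hs0 : (0:ℚ) < w^2+x^2+y^2+z^2)
    (hX : X = (1-(w^2+x^2+y^2+z^2))/(2*(1+(w^2+x^2+y^2+z^2))))
    (hY : Y = (w^2+x^2+y^2+z^2)/(1+(w^2+x^2+y^2+z^2))) :
    ∀ i, ∑ k, ((![0,0,0,0,0] : Fin 5 → ℚ) k - ![![w/2 - x/2, x/2 + w/2, y/2 + z/2, z/2 - y/2, 0],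
      ![w/2 - x*X, x/2 + w*X, y/2 + z*X, z/2 - y*X, Y],
      ![w/2 - x*X, x/2 + w*X, y/2 + z*X, z/2 - y*X, -Y]] i k) ^ 2
      = (w^2+x^2+y^2+z^2)/2 := by
  have hT' : (1:ℚ) + (w^2+x^2+y^2+z^2) ≠ 0 := by positivity
  subst hX hY
  intro i
  fin_cases i <;>
    · simp only [Fin.sum_univ_five, Matrix.cons_val_zero, Matrix.cons_val_one, Matrix.head_cons,
        Matrix.cons_val_two, Matrix.tail_cons, Matrix.cons_val_three, Matrix.cons_val_four,
        Matrix.cons_val', Matrix.head_fin_const, Matrix.empty_val', Matrix.cons_val_fin_one,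
        Fin.mk_zero, Fin.mk_one, Fin.reduceFinMk]
      field_simp
      ring

set_option maxHeartbeats 1000000 in
/-- Distances from the center to the `b`-part. -/
lemma stmt_19_cb (w x y z : ℚ) :
    ∀ i, ∑ k, ((![0,0,0,0,0] : Fin 5 → ℚ) k - ![![w/2 - y/2, x/2 - z/2, y/2 + w/2, z/2 + x/2, 0],
      ![w/2 - 3*y/10 - 2*z/5, x/2 - 3*z/10 + 2*y/5, y/2 + 3*w/10 - 2*x/5, z/2 + 3*x/10 + 2*w/5, 0],
      ![w/2 + 3*y/10 - 2*z/5, x/2 + 3*z/10 + 2*y/5, y/2 - 3*w/10 - 2*x/5, z/2 - 3*x/10 + 2*w/5, 0]] i k) ^ 2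
      = (w^2+x^2+y^2+z^2)/2 := by
  intro i
  fin_cases i <;>
    · simp [Fin.sum_univ_five]
      ring

/-- For every positive rational `r`, the complete tripartite graph `K_{1,3,3}` is a
subgraph of the distance-`√r` graph on `ℚ⁵`: there are points `c`, `a₁ a₂ a₃`,
`b₁ b₂ b₃` of `ℚ⁵` (the three parts), pairwise distinct within parts, with any two
points from different parts at squared Euclidean distance `r`. -/
theorem stmt_19 (r : ℚ) (hr : 0 < r) :
    ∃ (c : Fin 5 → ℚ) (a b : Fin 3 → (Fin 5 → ℚ)),
      Function.Injective a ∧ Function.Injective b ∧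
      (∀ i, ∑ k, (c k - a i k) ^ 2 = r) ∧
      (∀ i, ∑ k, (c k - b i k) ^ 2 = r) ∧
      (∀ i j, ∑ k, (a i k - b j k) ^ 2 = r) := by
  obtain ⟨w, x, y, z, h⟩ := stmt_19_four_sq r hr
  have hrs : r = (w^2+x^2+y^2+z^2)/2 := by linarith
  have hs0 : (0:ℚ) < w^2+x^2+y^2+z^2 := by linarith
  have hT : (0:ℚ) < 1 + (w^2+x^2+y^2+z^2) := by linarith
  have hYpos : (0:ℚ) < (w^2+x^2+y^2+z^2)/(1+(w^2+x^2+y^2+z^2)) := div_pos hs0 hT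
  subst hrs
  exact ⟨_, _, _, stmt_19_inj_a w x y z _ _ hYpos, stmt_19_inj_b w x y z hs0,
    stmt_19_ca w x y z _ _ hs0 rfl rfl, stmt_19_cb w x y z,
    stmt_19_cross w x y z _ _ hs0 rfl rfl⟩
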